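/- Define l : M₂(ℝ) → ℝ by l(v) := −(1/2)(v¹₂ − v²₁)². Let p ∈ (⋀²ℝ⁴)* have coordinates (e, p¹₁, p¹₂, p²₁, p²₂, r) with r ≠ 0 and r ≠ −2. Then the function v ↦ p(z(v)) − l(v) on M₂(ℝ) has exactly one critical point v*, and its critical value is p(z(v*)) − l(v*) = e + [ (p¹₂ + p²₁)² − 4 p¹₁p²₂ ] / (4r) − (p¹₂ − p²₁)² / (4(2 + r)). -/

import Mathlib

open ExteriorAlgebra

set_option synthInstance.maxHeartbeats 1000000
set_option maxHeartbeats 1000000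

/-- The wedge `v₁ ∧ ⋯ ∧ vₙ` of `n` vectors, as an element of the `n`-th exterior power. -/
noncomputable def wedge {Q : Type*} [AddCommGroup Q] [Module ℝ Q] (n : ℕ) (v : Fin n → Q) :
    ⋀[ℝ]^n Q :=
  ⟨ExteriorAlgebra.ιMulti ℝ n v, ExteriorAlgebra.ιMulti_range ℝ n ⟨v, rfl⟩⟩

/-- The element of the dual of `⋀[ℝ]^n Q` induced by an alternating `n`-form on `Q`. -/
noncomputable def extDual {Q : Type*} [AddCommGroup Q] [Module ℝ Q] (n : ℕ)
    (φ : Q [⋀^Fin n]→ₗ[ℝ] ℝ) : Module.Dual ℝ (⋀[ℝ]^n Q) :=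
  (ExteriorAlgebra.liftAlternating
      (Function.update (fun i => (0 : Q [⋀^Fin i]→ₗ[ℝ] ℝ)) n φ)).comp
    (⋀[ℝ]^n Q).subtype

/-- The basis covector `dξᵃ ∧ dξᵇ ∈ (⋀²ℝ⁴)*`, sending `w₀ ∧ w₁` to
`w₀ᵃ w₁ᵇ − w₁ᵃ w₀ᵇ`.  With the labels `(ξ⁰,ξ¹,ξ²,ξ³) = (x¹,x²,y¹,y²)`, `dd 0 1 = dx¹∧dx²`,
`dd 2 1 = dy¹∧dx²`, `dd 3 1 = dy²∧dx²`, `dd 0 2 = dx¹∧dy¹`, `dd 0 3 = dx¹∧dy²`,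
`dd 2 3 = dy¹∧dy²`. -/
noncomputable def dd (a b : Fin 4) : Module.Dual ℝ (⋀[ℝ]^2 (Fin 4 → ℝ)) :=
  extDual 2 ((Matrix.detRowAlternating : (Fin 2 → ℝ) [⋀^Fin 2]→ₗ[ℝ] ℝ).compLinearMap
    (LinearMap.pi ![(LinearMap.proj a : (Fin 4 → ℝ) →ₗ[ℝ] ℝ), LinearMap.proj b]))

/-- The vectors `u₁ = ∂x¹ + v¹₁∂y¹ + v²₁∂y²`, `u₂ = ∂x² + v¹₂∂y¹ + v²₂∂y²` associated with a
`2×2` matrix `v` (where `v i μ = v^(i+1)_(μ+1)`). -/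
noncomputable def ucol (v : Fin 2 → Fin 2 → ℝ) (μ : Fin 2) : Fin 4 → ℝ :=
  (Pi.single (Fin.castLE (by norm_num) μ) 1 : Fin 4 → ℝ) + v 0 μ • (Pi.single 2 1 : Fin 4 → ℝ) + v 1 μ • (Pi.single 3 1 : Fin 4 → ℝ)

/-- The Plücker chart `z(v) = u₁ ∧ u₂ ∈ ⋀²ℝ⁴`. -/
noncomputable def zmap (v : Fin 2 → Fin 2 → ℝ) : ⋀[ℝ]^2 (Fin 4 → ℝ) :=
  wedge 2 (ucol v)

/-- The element of `(⋀²ℝ⁴)*` with coordinates `(e, p¹₁, p¹₂, p²₁, p²₂, r)`, namely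
`e dx¹∧dx² + p¹₁ dy¹∧dx² + p¹₂ dy²∧dx² + p²₁ dx¹∧dy¹ + p²₂ dx¹∧dy² + r dy¹∧dy²`. -/
noncomputable def pform (e p11 p12 p21 p22 r : ℝ) : Module.Dual ℝ (⋀[ℝ]^2 (Fin 4 → ℝ)) :=
  e • dd 0 1 + p11 • dd 2 1 + p12 • dd 3 1 + p21 • dd 0 2 + p22 • dd 0 3 + r • dd 2 3

noncomputable def pi2 (i μ : Fin 2) : (Fin 2 → Fin 2 → ℝ) →L[ℝ] ℝ :=
  (ContinuousLinearMap.proj μ : (Fin 2 → ℝ) →L[ℝ] ℝ).comp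
    (ContinuousLinearMap.proj i : (Fin 2 → Fin 2 → ℝ) →L[ℝ] (Fin 2 → ℝ))

noncomputable def Dmap (p11 p12 p21 p22 r : ℝ) (v : Fin 2 → Fin 2 → ℝ) :
    (Fin 2 → Fin 2 → ℝ) →L[ℝ] ℝ :=
  (p11 + r * v 1 1) • pi2 0 0 + (p21 + v 0 1 - (r + 1) * v 1 0) • pi2 0 1 +
    (p12 - (r + 1) * v 0 1 + v 1 0) • pi2 1 0 + (p22 + r * v 0 0) • pi2 1 1

lemma dd_wedge (a b : Fin 4) (u : Fin 2 → (Fin 4 → ℝ)) :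
    dd a b (wedge 2 u) = u 0 a * u 1 b - u 0 b * u 1 a := by
  show (ExteriorAlgebra.liftAlternating
      (Function.update (fun i => (0 : (Fin 4 → ℝ) [⋀^Fin i]→ₗ[ℝ] ℝ)) 2 _))
    (ExteriorAlgebra.ιMulti ℝ 2 u) = _
  rw [ExteriorAlgebra.liftAlternating_apply_ιMulti, Function.update_self]
  have : ∀ w : Fin 2 → Fin 2 → ℝ, Matrix.detRowAlternating w = (Matrix.of w).det := fun _ => rfl
  rw [AlternatingMap.compLinearMap_apply, this, Matrix.det_fin_two]
  simp

lemma ucol_apply (v : Fin 2 → Fin 2 → ℝ) :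
    (ucol v 0 0 = 1 ∧ ucol v 0 1 = 0 ∧ ucol v 0 2 = v 0 0 ∧ ucol v 0 3 = v 1 0) ∧
    (ucol v 1 0 = 0 ∧ ucol v 1 1 = 1 ∧ ucol v 1 2 = v 0 1 ∧ ucol v 1 3 = v 1 1) := by
  refine ⟨⟨?_, ?_, ?_, ?_⟩, ⟨?_, ?_, ?_, ?_⟩⟩ <;>
    simp [ucol, Pi.single_apply, Fin.castLE, show ((0:Fin 2):Fin 4) = 0 from rfl]

lemma pform_zmap (e p11 p12 p21 p22 r : ℝ) (v : Fin 2 → Fin 2 → ℝ) :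
    pform e p11 p12 p21 p22 r (zmap v) =
      e + p11 * v 0 0 + p12 * v 1 0 + p21 * v 0 1 + p22 * v 1 1
        + r * (v 0 0 * v 1 1 - v 0 1 * v 1 0) := by
  obtain ⟨⟨h1, h2, h3, h4⟩, h5, h6, h7, h8⟩ := ucol_apply v
  simp only [pform, zmap, LinearMap.add_apply, LinearMap.smul_apply, dd_wedge,
    h1, h2, h3, h4, h5, h6, h7, h8, smul_eq_mul]
  ring

lemma hasF (e p11 p12 p21 p22 r : ℝ) (v : Fin 2 → Fin 2 → ℝ) :
    HasFDerivAt (fun w : Fin 2 → Fin 2 → ℝ =>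
        e + p11 * w 0 0 + p12 * w 1 0 + p21 * w 0 1 + p22 * w 1 1
          + r * (w 0 0 * w 1 1 - w 0 1 * w 1 0)
          + (1/2) * ((w 0 1 - w 1 0) * (w 0 1 - w 1 0)))
      (Dmap p11 p12 p21 p22 r v) v := by
  have h : ∀ i μ : Fin 2, HasFDerivAt (fun w : Fin 2 → Fin 2 → ℝ => w i μ) (pi2 i μ) v :=
    fun i μ => (pi2 i μ).hasFDerivAt
  have H := ((((((hasFDerivAt_const e v).add ((h 0 0).const_mul p11)).add
      ((h 1 0).const_mul p12)).add ((h 0 1).const_mul p21)).add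
      ((h 1 1).const_mul p22)).add
      ((((h 0 0).mul (h 1 1)).sub ((h 0 1).mul (h 1 0))).const_mul r)).add
      ((((h 0 1).sub (h 1 0)).mul ((h 0 1).sub (h 1 0))).const_mul (1/2))
  refine HasFDerivAt.congr_fderiv (H.congr_of_eventuallyEq (Filter.Eventually.of_forall fun w => ?_)) ?_
  · simp
  · ext w
    simp [Dmap, pi2]
    ring

lemma Dmap_eval (p11 p12 p21 p22 r : ℝ) (v w : Fin 2 → Fin 2 → ℝ) :
    Dmap p11 p12 p21 p22 r v w =
      (p11 + r * v 1 1) * w 0 0 + (p21 + v 0 1 - (r + 1) * v 1 0) * w 0 1 +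
        (p12 - (r + 1) * v 0 1 + v 1 0) * w 1 0 + (p22 + r * v 0 0) * w 1 1 := by
  simp [Dmap, pi2]

lemma Dmap_zero_iff (p11 p12 p21 p22 r : ℝ) (v : Fin 2 → Fin 2 → ℝ) :
    Dmap p11 p12 p21 p22 r v = 0 ↔
      p11 + r * v 1 1 = 0 ∧ p21 + v 0 1 - (r + 1) * v 1 0 = 0 ∧
        p12 - (r + 1) * v 0 1 + v 1 0 = 0 ∧ p22 + r * v 0 0 = 0 := by
  constructor
  · intro h
    refine ⟨?_, ?_, ?_, ?_⟩
    · have := ContinuousLinearMap.ext_iff.1 h (Pi.single 0 (Pi.single 0 1))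
      simpa [Dmap_eval, Pi.single_apply] using this
    · have := ContinuousLinearMap.ext_iff.1 h (Pi.single 0 (Pi.single 1 1))
      simpa [Dmap_eval, Pi.single_apply] using this
    · have := ContinuousLinearMap.ext_iff.1 h (Pi.single 1 (Pi.single 0 1))
      simpa [Dmap_eval, Pi.single_apply] using this
    · have := ContinuousLinearMap.ext_iff.1 h (Pi.single 1 (Pi.single 1 1))
      simpa [Dmap_eval, Pi.single_apply] using this
  · rintro ⟨h1, h2, h3, h4⟩
    ext w
    simp [Dmap_eval, h1, h2, h3, h4]

/-- Example 6 of the paper, Maxwell equations in two dimensions: for `r ≠ 0`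
and `r ≠ −2` the map `v ↦ p(z(v)) − l(v)`, with `l(v) = −(1/2)(v¹₂ − v²₁)²`, has exactly
one critical point, with critical value
`e + ((p¹₂ + p²₁)² − 4p¹₁p²₂)/(4r) − (p¹₂ − p²₁)²/(4(2 + r))`. -/
theorem statement17 (l : (Fin 2 → Fin 2 → ℝ) → ℝ)
    (hl : l = fun v => -(1 / 2) * (v 0 1 - v 1 0) ^ 2)
    (e p11 p12 p21 p22 r : ℝ) (hr : r ≠ 0) (hr' : r ≠ -2) :
    (∃! v : Fin 2 → Fin 2 → ℝ,
        fderiv ℝ (fun v : Fin 2 → Fin 2 → ℝ =>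
          pform e p11 p12 p21 p22 r (zmap v) - l v) v = 0) ∧
      ∀ v : Fin 2 → Fin 2 → ℝ,
        fderiv ℝ (fun v : Fin 2 → Fin 2 → ℝ =>
            pform e p11 p12 p21 p22 r (zmap v) - l v) v = 0 →
          pform e p11 p12 p21 p22 r (zmap v) - l v =
            e + ((p12 + p21) ^ 2 - 4 * p11 * p22) / (4 * r)
              - (p12 - p21) ^ 2 / (4 * (2 + r)) := by
  have hr2 : r + 2 ≠ 0 := fun h => hr' (by linarith)
  have hrr2 : r * (r + 2) ≠ 0 := mul_ne_zero hr hr2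
  have hfun : (fun v : Fin 2 → Fin 2 → ℝ => pform e p11 p12 p21 p22 r (zmap v) - l v) =
      fun w : Fin 2 → Fin 2 → ℝ =>
        e + p11 * w 0 0 + p12 * w 1 0 + p21 * w 0 1 + p22 * w 1 1
          + r * (w 0 0 * w 1 1 - w 0 1 * w 1 0)
          + (1/2) * ((w 0 1 - w 1 0) * (w 0 1 - w 1 0)) := by
    funext w
    rw [hl, pform_zmap]
    ring
  have hfd : ∀ v : Fin 2 → Fin 2 → ℝ,
      fderiv ℝ (fun v : Fin 2 → Fin 2 → ℝ =>
        pform e p11 p12 p21 p22 r (zmap v) - l v) v = Dmap p11 p12 p21 p22 r v := by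
    intro v
    rw [hfun]
    exact (hasF e p11 p12 p21 p22 r v).fderiv
  set b : ℝ := (p21 + (r + 1) * p12) / (r * (r + 2)) with hb
  set c : ℝ := (p12 + (r + 1) * p21) / (r * (r + 2)) with hc
  set vstar : Fin 2 → Fin 2 → ℝ := ![![-p22 / r, b], ![c, -p11 / r]] with hvstar
  have hv00 : vstar 0 0 = -p22 / r := rfl
  have hv01 : vstar 0 1 = b := rfl
  have hv10 : vstar 1 0 = c := rfl
  have hv11 : vstar 1 1 = -p11 / r := rfl
  have hstar : Dmap p11 p12 p21 p22 r vstar = 0 := by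
    rw [Dmap_zero_iff, hv00, hv01, hv10, hv11, hb, hc]
    refine ⟨?_, ?_, ?_, ?_⟩ <;> field_simp <;> ring
  have huniq : ∀ v : Fin 2 → Fin 2 → ℝ, Dmap p11 p12 p21 p22 r v = 0 → v = vstar := by
    intro v hv
    obtain ⟨h1, h2, h3, h4⟩ := (Dmap_zero_iff p11 p12 p21 p22 r v).1 hv
    have e00 : v 0 0 = -p22 / r := by
      rw [eq_div_iff hr]; linarith
    have e11 : v 1 1 = -p11 / r := by
      rw [eq_div_iff hr]; linarith
    have e01 : v 0 1 = b := by
      rw [hb, eq_div_iff hrr2]; linear_combination (-1) * h2 - (r + 1) * h3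
    have e10 : v 1 0 = c := by
      rw [hc, eq_div_iff hrr2]; linear_combination (-(r + 1)) * h2 - h3
    funext i μ
    fin_cases i <;> fin_cases μ
    · show v 0 0 = vstar 0 0; rw [e00, hv00]
    · show v 0 1 = vstar 0 1; rw [e01, hv01]
    · show v 1 0 = vstar 1 0; rw [e10, hv10]
    · show v 1 1 = vstar 1 1; rw [e11, hv11]
  constructor
  · refine ⟨vstar, ?_, ?_⟩
    · exact (hfd vstar).trans hstar
    · intro v hv
      exact huniq v (by rw [← hfd v]; exact hv)
  · intro v hv
    have hveq : v = vstar := huniq v (by rw [← hfd v]; exact hv)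
    have := congrFun hfun v
    rw [this, hveq, hv00, hv01, hv10, hv11, hb, hc]
    have h2r : (2:ℝ) + r ≠ 0 := fun h => hr' (by linarith)
    field_simp
    ring
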